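/- Let Λ be a lattice in ℝ^m and y ∈ ℝ^m. Let (x_k)_{k≥0} be any sequence of lattice points of Λ such that for every k, x_{k+1} = x_k + v_k where v_k is a minimizer of ‖y − x_k − v‖ over v ∈ R(Λ) ∪ {0}. Then there exists a finite K such that x_k is a closest lattice point to y for every k ≥ K. -/

import Mathlib

open scoped RealInnerProductSpace

/-- A relevant vector of the lattice `Λ`: a nonzero lattice point `v` with
`⟨v, x⟩ ≤ ⟨x, x⟩` for all `x ∈ Λ`. -/
def IsRelevantVector {E : Type*} [NormedAddCommGroup E] [InnerProductSpace ℝ E]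
    (Λ : Set E) (v : E) : Prop :=
  v ∈ Λ ∧ v ≠ 0 ∧ ∀ x ∈ Λ, ⟪v, x⟫ ≤ ⟪x, x⟫

/-- Key improvement lemma: if some lattice point strictly improves, a relevant vector does. -/
lemma relevant_improve {E : Type*} [NormedAddCommGroup E] [InnerProductSpace ℝ E]
    (Λ : Set E) (hsub : ∀ a ∈ Λ, ∀ c ∈ Λ, a - c ∈ Λ)
    (hfin : ∀ r : ℝ, {z ∈ Λ | ‖z‖ ≤ r}.Finite)
    (p z : E) (hz : z ∈ Λ) (hlt : ‖p - z‖ < ‖p‖) :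
    ∃ v, IsRelevantVector Λ v ∧ ‖p - v‖ < ‖p‖ := by
  set S : Set E := {w ∈ Λ | ‖p - w‖ < ‖p‖} with hS
  have hSfin : S.Finite := by
    refine (hfin (2 * ‖p‖)).subset ?_
    rintro w ⟨hw, hw2⟩
    refine ⟨hw, ?_⟩
    have h1 : ‖w‖ ≤ ‖p - w‖ + ‖p‖ := by
      have := norm_sub_le p (p - w)
      simpa [add_comm] using this
    linarith
  obtain ⟨v, hvS, hvmin⟩ := Set.exists_min_image S (fun w => ‖w‖) hSfin ⟨z, hz, hlt⟩
  have hv0 : v ≠ 0 := by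
    rintro rfl
    simp only [hS, Set.mem_setOf_eq, sub_zero] at hvS
    exact absurd hvS.2 (lt_irrefl _)
  refine ⟨v, ⟨hvS.1, hv0, ?_⟩, hvS.2⟩
  intro u hu
  by_contra hcon
  push_neg at hcon
  -- ⟪u,u⟫ < ⟪v,u⟫
  have huu : ‖u‖ ^ 2 < ⟪v, u⟫ := by rwa [← real_inner_self_eq_norm_sq]
  have hune : u ≠ 0 := by
    rintro rfl
    simp only [inner_zero_right, norm_zero] at huu
    nlinarith
  have hupos : (0:ℝ) < ‖u‖ := norm_pos_iff.mpr hune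
  have hiu : ⟪v, u⟫ ≤ ‖v‖ * ‖u‖ := real_inner_le_norm v u
  have hult : ‖u‖ < ‖v‖ := by nlinarith
  have hvusq : ‖v - u‖ ^ 2 = ‖v‖ ^ 2 - 2 * ⟪v, u⟫ + ‖u‖ ^ 2 := norm_sub_sq_real v u
  have hvult : ‖v - u‖ < ‖v‖ := by
    have h2 : ‖v - u‖ ^ 2 < ‖v‖ ^ 2 := by nlinarith
    exact lt_of_pow_lt_pow_left₀ 2 (norm_nonneg v) h2
  -- one of u, v - u is in S
  have hvin : ‖p - v‖ ^ 2 < ‖p‖ ^ 2 := by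
    have := hvS.2; nlinarith [norm_nonneg (p - v), norm_nonneg p]
  have hpv : ‖v‖ ^ 2 < 2 * ⟪p, v⟫ := by
    have := norm_sub_sq_real p v; nlinarith
  have key : ‖u‖ ^ 2 < 2 * ⟪p, u⟫ ∨ ‖v - u‖ ^ 2 < 2 * ⟪p, v - u⟫ := by
    by_contra hk
    push_neg at hk
    have hinn : ⟪p, v - u⟫ = ⟪p, v⟫ - ⟪p, u⟫ := inner_sub_right p v u
    nlinarith [hk.1, hk.2]
  rcases key with h | h
  · have huS : u ∈ S := by
      refine ⟨hu, ?_⟩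
      have : ‖p - u‖ ^ 2 < ‖p‖ ^ 2 := by
        have := norm_sub_sq_real p u; nlinarith
      exact lt_of_pow_lt_pow_left₀ 2 (norm_nonneg p) this
    exact absurd (hvmin u huS) (not_le.mpr hult)
  · have hvuΛ : v - u ∈ Λ := hsub v hvS.1 u hu
    have hvuS : v - u ∈ S := by
      refine ⟨hvuΛ, ?_⟩
      have : ‖p - (v - u)‖ ^ 2 < ‖p‖ ^ 2 := by
        have := norm_sub_sq_real p (v - u); nlinarith
      exact lt_of_pow_lt_pow_left₀ 2 (norm_nonneg p) this
    exact absurd (hvmin _ hvuS) (not_le.mpr hvult)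

lemma lattice_ball_finite (n m : ℕ) (b : Fin n → EuclideanSpace ℝ (Fin m))
    (hb : LinearIndependent ℝ b)
    (Λ : Set (EuclideanSpace ℝ (Fin m)))
    (hΛ : Λ = {x | ∃ u : Fin n → ℤ, x = ∑ i, (u i : ℝ) • b i})
    (c : EuclideanSpace ℝ (Fin m)) (r : ℝ) :
    {z ∈ Λ | ‖z - c‖ ≤ r}.Finite := by
  classical
  have hbr : LinearIndepOn ℝ id (Set.range b) :=
    (linearIndepOn_id_range_iff hb.injective).mpr hb
  let B := Module.Basis.extend hbr
  haveI : Fintype (hbr.extend (Set.subset_univ _)) := FiniteDimensional.fintypeBasisIndex B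
  have hΛsub : Λ ⊆ (Submodule.span ℤ (Set.range ⇑B) : Set (EuclideanSpace ℝ (Fin m))) := by
    rw [hΛ]
    rintro z ⟨u, rfl⟩
    refine Submodule.sum_mem _ fun i _ => ?_
    rw [Int.cast_smul_eq_zsmul]
    refine Submodule.smul_mem _ _ (Submodule.subset_span ?_)
    rw [Module.Basis.range_extend]
    exact hbr.subset_extend _ ⟨i, rfl⟩
  have hdisc : DiscreteTopology
      ((Submodule.span ℤ (Set.range ⇑B) : Set (EuclideanSpace ℝ (Fin m)))) :=
    inferInstanceAs (DiscreteTopology (Submodule.span ℤ (Set.range ⇑B)))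
  have hclosed : IsClosed (Submodule.span ℤ (Set.range ⇑B) : Set (EuclideanSpace ℝ (Fin m))) := by
    have : DiscreteTopology (Submodule.span ℤ (Set.range ⇑B)).toAddSubgroup :=
      inferInstanceAs (DiscreteTopology (Submodule.span ℤ (Set.range ⇑B)))
    exact AddSubgroup.isClosed_of_discrete (H := (Submodule.span ℤ (Set.range ⇑B)).toAddSubgroup)
  have hC : IsCompact ((Submodule.span ℤ (Set.range ⇑B) : Set (EuclideanSpace ℝ (Fin m)))
      ∩ Metric.closedBall c r) :=
    Metric.isCompact_of_isClosed_isBounded (hclosed.inter Metric.isClosed_closedBall)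
      (Metric.isBounded_closedBall.subset Set.inter_subset_right)
  have hfin := hC.finite (isDiscrete_iff_discreteTopology.mpr (DiscreteTopology.of_subset hdisc Set.inter_subset_left))
  refine hfin.subset ?_
  rintro z ⟨hz, hzr⟩
  exact ⟨hΛsub hz, by simpa [Metric.mem_closedBall, dist_eq_norm] using hzr⟩


/-- Any sequence of lattice points with `x_{k+1} = x_k + v_k`, where `v_k`
minimizes `‖y − x_k − v‖` over `v ∈ R(Λ) ∪ {0}`, reaches a closest lattice point to `y`
after finitely many steps and stays at closest lattice points thereafter. -/
theorem iteration_reaches_closest_point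
    (n m : ℕ) (b : Fin n → EuclideanSpace ℝ (Fin m))
    (hb : LinearIndependent ℝ b)
    (Λ : Set (EuclideanSpace ℝ (Fin m)))
    (hΛ : Λ = {x | ∃ u : Fin n → ℤ, x = ∑ i, (u i : ℝ) • b i})
    (y : EuclideanSpace ℝ (Fin m))
    (x : ℕ → EuclideanSpace ℝ (Fin m))
    (hx0 : x 0 ∈ Λ)
    (hstep : ∀ k, ∃ v, (IsRelevantVector Λ v ∨ v = 0) ∧ x (k + 1) = x k + v ∧
      ∀ w, (IsRelevantVector Λ w ∨ w = 0) → ‖y - x k - v‖ ≤ ‖y - x k - w‖) :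
    ∃ K : ℕ, ∀ k ≥ K, x k ∈ Λ ∧ ∀ x' ∈ Λ, ‖y - x k‖ ≤ ‖y - x'‖ := by
  classical
  have hzero : (0 : EuclideanSpace ℝ (Fin m)) ∈ Λ := by
    rw [hΛ]; exact ⟨0, by simp⟩
  have hsub : ∀ a ∈ Λ, ∀ c ∈ Λ, a - c ∈ Λ := by
    rw [hΛ]
    rintro a ⟨u, rfl⟩ c ⟨w, rfl⟩
    refine ⟨u - w, ?_⟩
    rw [← Finset.sum_sub_distrib]
    congr 1; funext i
    simp [sub_smul]
  have hadd : ∀ a ∈ Λ, ∀ c ∈ Λ, a + c ∈ Λ := by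
    intro a ha c hc
    have := hsub a ha (0 - c) (hsub 0 hzero c hc)
    simpa [sub_sub_cancel, sub_neg_eq_add, zero_sub] using this
  have hfin : ∀ r : ℝ, {z ∈ Λ | ‖z‖ ≤ r}.Finite := by
    intro r
    have := lattice_ball_finite n m b hb Λ hΛ 0 r
    simpa using this
  have hmem : ∀ k, x k ∈ Λ := by
    intro k
    induction k with
    | zero => exact hx0
    | succ k ih =>
      obtain ⟨v, hv, hstepk, -⟩ := hstep k
      rw [hstepk]
      rcases hv with hv | rfl
      · exact hadd _ ih _ hv.1
      · simpa using ih
  have hmono : ∀ k, ‖y - x (k + 1)‖ ≤ ‖y - x k‖ := by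
    intro k
    obtain ⟨v, hv, hstepk, hminv⟩ := hstep k
    have h0 := hminv 0 (Or.inr rfl)
    rw [sub_zero] at h0
    have h2 : y - x (k + 1) = y - x k - v := by rw [hstepk]; abel
    rw [h2]; exact h0
  have hanti : Antitone fun k => ‖y - x k‖ := antitone_nat_of_succ_le hmono
  set d0 := ‖y - x 0‖ with hd0
  have hT : {z ∈ Λ | ‖z - y‖ ≤ d0}.Finite := lattice_ball_finite n m b hb Λ hΛ y d0
  have hx0T : x 0 ∈ {z ∈ Λ | ‖z - y‖ ≤ d0} := ⟨hx0, by rw [norm_sub_rev]⟩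
  obtain ⟨z0, hz0T, hz0min⟩ := Set.exists_min_image _ (fun z => ‖y - z‖) hT ⟨x 0, hx0T⟩
  set μ := ‖y - z0‖ with hμ
  have hz0glob : ∀ z ∈ Λ, μ ≤ ‖y - z‖ := by
    intro z hz
    by_cases h : ‖z - y‖ ≤ d0
    · exact hz0min z ⟨hz, h⟩
    · push_neg at h
      have h1 : μ ≤ d0 := hz0min (x 0) hx0T
      have h2 : ‖y - z‖ = ‖z - y‖ := norm_sub_rev _ _
      linarith
  have hμle : ∀ k, μ ≤ ‖y - x k‖ := fun k => hz0glob _ (hmem k)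
  have hdec : ∀ k, μ < ‖y - x k‖ → ‖y - x (k + 1)‖ < ‖y - x k‖ := by
    intro k hk
    have hz' : z0 - x k ∈ Λ := hsub _ hz0T.1 _ (hmem k)
    have himp : ‖(y - x k) - (z0 - x k)‖ < ‖y - x k‖ := by
      have he : (y - x k) - (z0 - x k) = y - z0 := by abel
      rw [he]; exact hk
    obtain ⟨v, hvrel, hvlt⟩ := relevant_improve Λ hsub hfin (y - x k) (z0 - x k) hz' himp
    obtain ⟨v0, hv0, hstepk, hminv⟩ := hstep k
    have h1 : ‖y - x k - v0‖ ≤ ‖y - x k - v‖ := hminv v (Or.inl hvrel)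
    have h2 : y - x (k + 1) = y - x k - v0 := by rw [hstepk]; abel
    rw [h2]
    exact lt_of_le_of_lt h1 hvlt
  have hK : ∃ K, ‖y - x K‖ = μ := by
    by_contra hno
    push_neg at hno
    have hstrict : StrictAnti fun k => ‖y - x k‖ :=
      strictAnti_nat_of_succ_lt fun k => hdec k (lt_of_le_of_ne (hμle k) (Ne.symm (hno k)))
    have hinj : Function.Injective x := by
      intro a c hac
      exact hstrict.injective (by rw [hac] : ‖y - x a‖ = ‖y - x c‖)
    have hrange : Set.range x ⊆ {z ∈ Λ | ‖z - y‖ ≤ d0} := by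
      rintro _ ⟨k, rfl⟩
      exact ⟨hmem k, by rw [norm_sub_rev]; exact hanti (Nat.zero_le k)⟩
    exact absurd (hT.subset hrange) (Set.infinite_range_of_injective hinj)
  obtain ⟨K, hKeq⟩ := hK
  have hconst : ∀ k, K ≤ k → ‖y - x k‖ = μ := by
    intro k hk
    induction k, hk using Nat.le_induction with
    | base => exact hKeq
    | succ k hk ih => exact le_antisymm (le_trans (hmono k) (le_of_eq ih)) (hμle _)
  exact ⟨K, fun k hk => ⟨hmem k, fun x' hx' => (hconst k hk) ▸ hz0glob x' hx'⟩⟩
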